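/- Let 𝒲, 𝒳, 𝒴 be finite sets, let P_W be a pmf on 𝒲, and for each w ∈ 𝒲 let P_{X|W=w} be a pmf on 𝒳 and P_{Y|W=w} a pmf on 𝒴. Define the pmf π on 𝒳 × 𝒴 by π(x,y) := Σ_w P_W(w)·P_{X|W=w}(x)·P_{Y|W=w}(y). Then Σ_w P_W(w)·𝓗(P_{X|W=w}, P_{Y|W=w} ‖ π) ≥ H(π), where the sum on the left is taken in the extended reals. -/

import Mathlib

open scoped BigOperators

/-- `log(1/t)` with values in the extended reals: `+∞` when `t = 0`. -/
noncomputable def negLogE (t : ℝ) : EReal :=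
  if t = 0 then (⊤ : EReal) else ((Real.log t⁻¹ : ℝ) : EReal)

/-- `Q` is a coupling of the pmfs `PX` and `PY`. -/
def IsCoupling {X Y : Type*} [Fintype X] [Fintype Y]
    (PX : X → ℝ) (PY : Y → ℝ) (Q : X × Y → ℝ) : Prop :=
  (∀ p, 0 ≤ Q p) ∧ (∀ x, ∑ y, Q (x, y) = PX x) ∧ (∀ y, ∑ x, Q (x, y) = PY y)

/-- The maximal cross-entropy `𝓗(PX, PY ‖ π)`, with values in the extended reals. -/
noncomputable def maxCrossEnt {X Y : Type*} [Fintype X] [Fintype Y]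
    (PX : X → ℝ) (PY : Y → ℝ) (π : X × Y → ℝ) : EReal :=
  sSup {s : EReal | ∃ Q, IsCoupling PX PY Q ∧
    s = ∑ p : X × Y, (Q p : EReal) * negLogE (π p)}

/-- Shannon entropy `H(P) = ∑ P(x) log(1/P(x))` (with `0 · log (1/0) = 0`). -/
noncomputable def entropy {X : Type*} [Fintype X] (P : X → ℝ) : ℝ :=
  ∑ x, P x * Real.log (P x)⁻¹

lemma ereal_coe_sum {ι : Type*} (s : Finset ι) (f : ι → ℝ) :
    ((∑ i ∈ s, f i : ℝ) : EReal) = ∑ i ∈ s, ((f i : ℝ) : EReal) := by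
  classical
  induction s using Finset.induction with
  | empty => simp
  | insert a s h ih => simp [Finset.sum_insert h, EReal.coe_add, ih]

/-- Distribute a sum of nonneg reals over a nonneg EReal on the right. -/
lemma ereal_sum_mul {ι : Type*} (s : Finset ι) (f : ι → ℝ) (hf : ∀ i ∈ s, 0 ≤ f i)
    (L : EReal) (hL : 0 ≤ L) :
    ((∑ i ∈ s, f i : ℝ) : EReal) * L = ∑ i ∈ s, ((f i : ℝ) : EReal) * L := by
  classical
  induction s using Finset.induction with
  | empty => simp
  | @insert a s h ih =>
    rw [Finset.sum_insert h, Finset.sum_insert h, EReal.coe_add,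
      EReal.right_distrib_of_nonneg (by exact_mod_cast hf a (Finset.mem_insert_self a s))
        (by exact_mod_cast Finset.sum_nonneg fun i hi => hf i (Finset.mem_insert_of_mem hi)),
      ih fun i hi => hf i (Finset.mem_insert_of_mem hi)]

/-- Distribute a nonneg real scalar over a sum of nonneg ERreals. -/
lemma ereal_mul_sum {ι : Type*} (s : Finset ι) (c : ℝ) (hc : 0 ≤ c)
    (g : ι → EReal) (hg : ∀ i ∈ s, 0 ≤ g i) :
    (c : EReal) * ∑ i ∈ s, g i = ∑ i ∈ s, (c : EReal) * g i := by
  classical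
  induction s using Finset.induction with
  | empty => simp
  | @insert a s h ih =>
    rw [Finset.sum_insert h, Finset.sum_insert h,
      EReal.left_distrib_of_nonneg (hg a (Finset.mem_insert_self a s))
        (Finset.sum_nonneg fun i hi => hg i (Finset.mem_insert_of_mem hi)),
      ih fun i hi => hg i (Finset.mem_insert_of_mem hi)]

/-- for a mixture `π(x,y) = ∑_w P_W(w) P_{X|W=w}(x) P_{Y|W=w}(y)`,
`∑_w P_W(w) 𝓗(P_{X|W=w}, P_{Y|W=w} ‖ π) ≥ H(π)` (the left sum taken in the
extended reals). -/
theorem stmt_8 {W X Y : Type*} [Fintype W] [Fintype X] [Fintype Y]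
    (PW : W → ℝ) (hPW0 : ∀ w, 0 ≤ PW w) (hPW1 : ∑ w, PW w = 1)
    (PX : W → X → ℝ) (hPX0 : ∀ w x, 0 ≤ PX w x) (hPX1 : ∀ w, ∑ x, PX w x = 1)
    (PY : W → Y → ℝ) (hPY0 : ∀ w y, 0 ≤ PY w y) (hPY1 : ∀ w, ∑ y, PY w y = 1) :
    ((entropy (fun p : X × Y => ∑ w, PW w * PX w p.1 * PY w p.2) : ℝ) : EReal)
      ≤ ∑ w, (PW w : EReal) *
          maxCrossEnt (PX w) (PY w)
            (fun p : X × Y => ∑ w', PW w' * PX w' p.1 * PY w' p.2) := by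
  classical
  set π : X × Y → ℝ := fun p => ∑ w', PW w' * PX w' p.1 * PY w' p.2 with hπdef
  have hπ0 : ∀ p, 0 ≤ π p := fun p =>
    Finset.sum_nonneg fun w _ => mul_nonneg (mul_nonneg (hPW0 w) (hPX0 w p.1)) (hPY0 w p.2)
  have hπ1 : ∑ p : X × Y, π p = 1 := by
    have : ∑ p : X × Y, π p = ∑ w, PW w * (∑ x, PX w x) * (∑ y, PY w y) := by
      rw [Finset.sum_comm]
      refine Finset.sum_congr rfl fun w _ => ?_
      simp [Fintype.sum_prod_type, Finset.mul_sum, ← Finset.sum_mul, mul_assoc,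
        mul_comm, mul_left_comm]
    rw [this]
    simp only [hPX1, hPY1, mul_one]
    exact hPW1
  have hπle1 : ∀ p, π p ≤ 1 := by
    intro p
    rw [← hπ1]
    exact Finset.single_le_sum (fun q _ => hπ0 q) (Finset.mem_univ p)
  have hL0 : ∀ p, 0 ≤ negLogE (π p) := by
    intro p
    unfold negLogE
    split_ifs with h
    · exact le_top
    · have hpos : 0 < π p := lt_of_le_of_ne (hπ0 p) (Ne.symm h)
      have : 0 ≤ Real.log (π p)⁻¹ :=
        Real.log_nonneg ((one_le_inv₀ hpos).2 (hπle1 p))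
      exact_mod_cast this
  -- For each w, the product coupling gives a lower bound on maxCrossEnt
  have hS : ∀ w,
      (∑ p : X × Y, ((PX w p.1 * PY w p.2 : ℝ) : EReal) * negLogE (π p))
        ≤ maxCrossEnt (PX w) (PY w) π := by
    intro w
    apply le_sSup
    refine ⟨fun p => PX w p.1 * PY w p.2, ⟨?_, ?_, ?_⟩, rfl⟩
    · exact fun p => mul_nonneg (hPX0 w p.1) (hPY0 w p.2)
    · intro x; simp only []; rw [← Finset.mul_sum, hPY1, mul_one]
    · intro y; simp only []; rw [← Finset.sum_mul, hPX1, one_mul]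
  have key : ((entropy π : ℝ) : EReal)
      = ∑ w, (PW w : EReal) *
          ∑ p : X × Y, ((PX w p.1 * PY w p.2 : ℝ) : EReal) * negLogE (π p) := by
    have step1 : ∀ w, (PW w : EReal) *
        ∑ p : X × Y, ((PX w p.1 * PY w p.2 : ℝ) : EReal) * negLogE (π p)
        = ∑ p : X × Y, ((PW w * PX w p.1 * PY w p.2 : ℝ) : EReal) * negLogE (π p) := by
      intro w
      rw [ereal_mul_sum _ _ (hPW0 w) _
        (fun p _ => mul_nonneg
          (by exact_mod_cast mul_nonneg (hPX0 w p.1) (hPY0 w p.2)) (hL0 p))]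
      refine Finset.sum_congr rfl fun p _ => ?_
      rw [← mul_assoc, ← EReal.coe_mul, ← mul_assoc]
    rw [Finset.sum_congr rfl fun w _ => step1 w, Finset.sum_comm]
    have step2 : ∀ p : X × Y,
        (∑ w, ((PW w * PX w p.1 * PY w p.2 : ℝ) : EReal) * negLogE (π p))
        = (π p : EReal) * negLogE (π p) := by
      intro p
      rw [← ereal_sum_mul _ _
        (fun w _ => mul_nonneg (mul_nonneg (hPW0 w) (hPX0 w p.1)) (hPY0 w p.2))
        _ (hL0 p)]
    rw [Finset.sum_congr rfl fun p _ => step2 p]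
    unfold entropy
    rw [ereal_coe_sum]
    refine Finset.sum_congr rfl fun p _ => ?_
    by_cases h : π p = 0
    · simp [negLogE, h]
    · rw [negLogE, if_neg h, ← EReal.coe_mul]
  rw [key]
  refine Finset.sum_le_sum fun w _ => ?_
  exact mul_le_mul_of_nonneg_left (hS w) (by exact_mod_cast hPW0 w)
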